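/- Let a > 0 and θ ∈ (1/2, 1). The equation s - 2·a^{(2-2θ)/(1-2θ)}·s^θ + a^{2/(1-2θ)} = 0 for s > 0 has exactly two distinct solutions, one of which equals a^{2/(1-2θ)}. -/

import Mathlib

open Real Set

lemma gconvex {θ : ℝ} (hθ1 : 1/2 < θ) (hθ2 : θ < 1) :
    StrictConvexOn ℝ (Set.Ici 0) (fun t : ℝ => t - 2 * t ^ θ + 1) := by
  have hpos : (0:ℝ) < θ := by linarith
  have hcc : StrictConcaveOn ℝ (Set.Ici 0) (fun t : ℝ => t ^ θ + t ^ θ) :=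
    (Real.strictConcaveOn_rpow hpos hθ2).add (Real.strictConcaveOn_rpow hpos hθ2)
  have hcv : ConvexOn ℝ (Set.Ici 0) (fun t : ℝ => t + 1) :=
    (convexOn_id (convex_Ici 0)).add (convexOn_const 1 (convex_Ici 0))
  have : StrictConvexOn ℝ (Set.Ici 0) (fun t : ℝ => (t + 1) - (t ^ θ + t ^ θ)) :=
    hcv.sub_strictConcaveOn hcc
  convert this using 2 with t
  ring

lemma gmid {g : ℝ → ℝ} (hg : StrictConvexOn ℝ (Set.Ici 0) g) {x m z : ℝ}
    (hx : 0 ≤ x) (h1 : x < m) (h2 : m < z) : g m < max (g x) (g z) :=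
  hg.lt_on_openSegment (mem_Ici.2 hx) (mem_Ici.2 (by linarith)) (ne_of_lt (h1.trans h2))
    (by rw [openSegment_eq_Ioo (h1.trans h2)]; exact ⟨h1, h2⟩)

lemma gred {θ : ℝ} (hθ1 : 1/2 < θ) (hθ2 : θ < 1) :
    ∃ tb : ℝ, 1 < tb ∧ ∀ t > (0:ℝ), (t - 2 * t ^ θ + 1 = 0 ↔ t = 1 ∨ t = tb) := by
  set g : ℝ → ℝ := fun t => t - 2 * t ^ θ + 1 with hg
  have hg1 : g 1 = 0 := by simp [hg, Real.one_rpow]; norm_num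
  -- derivative at 1
  have hder : HasDerivAt g (1 - 2 * θ) 1 := by
    have h1 : HasDerivAt (fun t : ℝ => t ^ θ) (θ * (1:ℝ) ^ (θ - 1)) 1 :=
      Real.hasDerivAt_rpow_const (Or.inl one_ne_zero)
    have h2 := ((hasDerivAt_id 1).sub (h1.const_mul 2)).add_const 1
    exact h2.congr_deriv (by simp [Real.one_rpow])
  -- a point t0 ∈ (1,2) with g t0 < 0
  have hslope : Filter.Tendsto (slope g 1) (nhdsWithin 1 {(1:ℝ)}ᶜ) (nhds (1 - 2*θ)) :=
    hasDerivAt_iff_tendsto_slope.1 hder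
  have hneg : ∀ᶠ t in nhdsWithin 1 {(1:ℝ)}ᶜ, slope g 1 t < 0 :=
    hslope.eventually_lt_const (by linarith)
  have hle : nhdsWithin (1:ℝ) (Set.Ioo 1 2) ≤ nhdsWithin 1 {(1:ℝ)}ᶜ := by
    apply nhdsWithin_mono
    intro x hx
    exact ne_of_gt hx.1
  have hne : (nhdsWithin (1:ℝ) (Set.Ioo 1 2)).NeBot := by
    apply IsGLB.nhdsWithin_neBot
    · exact isGLB_Ioo one_lt_two
    · exact Set.nonempty_Ioo.2 one_lt_two
  obtain ⟨t0, ht0s, ht0m⟩ := (hneg.filter_mono hle).and self_mem_nhdsWithin |>.exists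
  have ht01 : 1 < t0 := ht0m.1
  have hgt0 : g t0 < 0 := by
    have := ht0s
    rw [slope_def_field] at this
    have h' : (g t0 - g 1) / (t0 - 1) < 0 := by
      simpa [div_eq_div_iff] using this
    have hpos : 0 < t0 - 1 := by linarith
    rcases div_neg_iff.1 h' with ⟨h1', h2'⟩ | ⟨h1', h2'⟩ <;> linarith
  -- a large point T with g T > 0
  set T : ℝ := (4:ℝ) ^ ((1:ℝ)/(1-θ)) with hT
  have hθne : (1:ℝ) - θ ≠ 0 := by linarith
  have hTθ : T ^ θ = (4:ℝ) ^ (θ/(1-θ)) := by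
    rw [hT, ← Real.rpow_mul (by norm_num : (0:ℝ) ≤ 4)]
    congr 1
    field_simp
  have hTval : T = 4 * (4:ℝ) ^ (θ/(1-θ)) := by
    rw [hT]
    have : (1:ℝ)/(1-θ) = 1 + θ/(1-θ) := by field_simp; ring
    rw [this, Real.rpow_add (by norm_num), Real.rpow_one]
  have hxpos : (0:ℝ) < (4:ℝ) ^ (θ/(1-θ)) := Real.rpow_pos_of_pos (by norm_num) _
  have hgT : 0 < g T := by
    have : g T = 2 * (4:ℝ) ^ (θ/(1-θ)) + 1 := by
      simp only [hg]
      rw [hTθ, hTval]; ring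
    rw [this]; linarith
  have hT4 : (4:ℝ) ≤ T := by
    have : (4:ℝ) ^ (1:ℝ) ≤ (4:ℝ) ^ ((1:ℝ)/(1-θ)) := by
      apply Real.rpow_le_rpow_of_exponent_le (by norm_num)
      rw [le_div_iff₀ (by linarith)]
      linarith
    rwa [Real.rpow_one] at this
  have ht0T : t0 ≤ T := by linarith [ht0m.2]
  -- continuity
  have hcont : ContinuousOn g (Set.Icc t0 T) := by
    intro t ht
    have htpos : t ≠ 0 := by
      have := ht.1; intro h; rw [h] at this; linarith
    exact (((continuousAt_id.sub ((Real.continuousAt_rpow_const t θ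
      (Or.inl htpos)).const_mul 2)).add continuousAt_const)).continuousWithinAt
  -- IVT
  have hmem : (0:ℝ) ∈ Set.Icc (g t0) (g T) := ⟨hgt0.le, hgT.le⟩
  obtain ⟨tb, htbmem, htb0⟩ := intermediate_value_Icc ht0T hcont hmem
  have htb1 : 1 < tb := lt_of_lt_of_le ht01 htbmem.1
  refine ⟨tb, htb1, ?_⟩
  intro t ht
  constructor
  · intro hgt
    by_contra hcon
    push_neg at hcon
    obtain ⟨hne1, hnetb⟩ := hcon
    have hconv := gconvex hθ1 hθ2
    have hmax : ∀ {x m z : ℝ}, 0 ≤ x → x < m → m < z → g x = 0 → g m = 0 → g z = 0 → False := by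
      intro x m z hx h1 h2 hgx hgm hgz
      have := gmid hconv hx h1 h2
      rw [show x - 2 * x ^ θ + 1 = (0:ℝ) from hgx, show m - 2 * m ^ θ + 1 = (0:ℝ) from hgm,
        show z - 2 * z ^ θ + 1 = (0:ℝ) from hgz] at this
      simp at this
    rcases lt_trichotomy t 1 with h | h | h
    · exact hmax ht.le h htb1 hgt hg1 htb0
    · exact hne1 h
    · rcases lt_trichotomy t tb with h' | h' | h'
      · exact hmax (by norm_num) h h' hg1 hgt htb0
      · exact hnetb h'
      · exact hmax (by norm_num) htb1 h' hg1 htb0 hgt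
  · rintro (rfl | rfl)
    · exact hg1
    · exact htb0

theorem stmt_18 (a θ : ℝ) (ha : 0 < a) (hθ : θ ∈ Set.Ioo (1/2 : ℝ) 1) :
    ∃ sb : ℝ, 0 < sb ∧ sb ≠ a ^ ((2:ℝ) / (1 - 2 * θ)) ∧
      ∀ s > (0:ℝ),
        (s - 2 * a ^ ((2 - 2 * θ) / (1 - 2 * θ)) * s ^ θ + a ^ ((2:ℝ) / (1 - 2 * θ)) = 0 ↔
          s = a ^ ((2:ℝ) / (1 - 2 * θ)) ∨ s = sb) := by
  obtain ⟨hθ1, hθ2⟩ := hθ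
  obtain ⟨tb, htb1, htb⟩ := gred hθ1 hθ2
  set B : ℝ := a ^ ((2:ℝ) / (1 - 2 * θ)) with hB
  have hBpos : 0 < B := Real.rpow_pos_of_pos ha _
  have h2θ : (1:ℝ) - 2 * θ ≠ 0 := by intro h; nlinarith
  have hC : a ^ ((2 - 2 * θ) / (1 - 2 * θ)) = B ^ (1 - θ) := by
    rw [hB, ← Real.rpow_mul ha.le]
    congr 1
    field_simp
  refine ⟨B * tb, by positivity, ?_, ?_⟩
  · intro h
    have : tb = 1 := mul_left_cancel₀ hBpos.ne' (by rw [mul_one]; exact h)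
    linarith
  · intro s hs
    have key : s - 2 * a ^ ((2 - 2 * θ) / (1 - 2 * θ)) * s ^ θ + B
        = B * ((s / B) - 2 * (s / B) ^ θ + 1) := by
      have hBθ : (0:ℝ) < B ^ θ := Real.rpow_pos_of_pos hBpos θ
      have hsplit : B ^ (1 - θ) = B / B ^ θ := by
        rw [Real.rpow_sub hBpos, Real.rpow_one]
      rw [hC, Real.div_rpow hs.le hBpos.le, hsplit]
      field_simp
    rw [key]
    have := htb (s / B) (div_pos hs hBpos)
    constructor
    · intro h
      have h0 : (s / B) - 2 * (s / B) ^ θ + 1 = 0 := by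
        rcases mul_eq_zero.1 h with h' | h'
        · exact absurd h' hBpos.ne'
        · exact h'
      rcases this.1 h0 with h' | h'
      · left
        have := (div_eq_iff hBpos.ne').1 h'
        rw [one_mul] at this
        exact this
      · right
        have := (div_eq_iff hBpos.ne').1 h'
        rw [mul_comm] at this
        exact this
    · intro h
      have h0 : s / B = 1 ∨ s / B = tb := by
        rcases h with rfl | rfl
        · left; exact div_self hBpos.ne'
        · right; exact mul_div_cancel_left₀ tb hBpos.ne'
      rw [this.2 h0, mul_zero]
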